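/- arXiv:2204.04600 — 4 statements merged into one kernel-verified Lean document; each statement's English description precedes it below -/
import Mathlib

section
/- For all n ≥ k ≥ r ≥ 1, any n-vertex graph containing no copy of K_{k+1} has at most as many copies of K_r as the Turán graph T(n,k); that is, ex(n, K_r, K_{k+1}) = N(K_r, T(n,k)). -/
open SimpleGraph Filter Asymptotics Finset

/-- The set of copies of `H` in `G`: subgraphs of `G` isomorphic to `H`. -/
def SimpleGraph.copySet {α V : Type*} (H : SimpleGraph α) (G : SimpleGraph V) :
    Set G.Subgraph := {C | Nonempty (H ≃g C.coe)}

/-- The number of (unlabeled) copies of `H` in `G`, i.e. `N(H,G)`. -/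
noncomputable def copyCount {α V : Type*} (H : SimpleGraph α) (G : SimpleGraph V) : ℕ :=
  (H.copySet G).ncard

/-- `G` is `F`-free: it contains no subgraph isomorphic to `F`. -/
def FFree {β V : Type*} (F : SimpleGraph β) (G : SimpleGraph V) : Prop := F.copySet G = ∅

/-- The generalized Turán number `ex(n, H, F)`. -/
noncomputable def exGen {α β : Type*} (n : ℕ) (H : SimpleGraph α) (F : SimpleGraph β) : ℕ :=
  sSup {m | ∃ G : SimpleGraph (Fin n), FFree F G ∧ copyCount H G = m}

/-- The complete multipartite graph with part sizes `a 0, …, a (k-1)`. -/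
def CMP (k : ℕ) (a : Fin k → ℕ) : SimpleGraph (Σ i : Fin k, Fin (a i)) :=
  SimpleGraph.comap Sigma.fst ⊤

/-!
Induction on the number `n` of vertices. By Turán's bound on the number of edges, a
`K_{j+2}`-free graph on `n` vertices has a vertex `v` with `(j + 1) · deg v ≤ j · n`. An
`(r+1)`-clique either avoids `v` or consists of `v` and an `r`-clique of the `K_{j+1}`-free
neighbourhood of `v`, so by induction the number of `(r+1)`-cliques is at most
`N(K_{r+1}, T(n-1, j+1)) + N(K_r, T(deg v, j))`. Splitting the cliques of `T(n, j+1)` in the same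
way at a vertex of its largest part, whose neighbourhood contains a copy of `T(d, j)` for every
`d` with `(j + 1) · d ≤ j · n`, bounds this sum by `N(K_{r+1}, T(n, j+1))`.
-/

namespace SimpleGraph

lemma IsNClique.map_embedding {V W : Type*} {G : SimpleGraph V} {H : SimpleGraph W} {r : ℕ}
    {t : Finset W} (ht : H.IsNClique r t) (f : H ↪g G) :
    G.IsNClique r (t.map f.toEmbedding) := by
  refine ⟨fun x hx y hy hxy ↦ ?_, by rw [card_map, ht.2]⟩
  simp only [coe_map, Set.mem_image, mem_coe] at hx hy
  obtain ⟨a, ha, rfl⟩ := hx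
  obtain ⟨b, hb, rfl⟩ := hy
  exact f.map_adj_iff.2 (ht.1 ha hb (ne_of_apply_ne _ hxy))

section CliqueCount

variable {V W : Type*} [Fintype V] [DecidableEq V] {G : SimpleGraph V} [DecidableRel G.Adj]
  {r : ℕ}

lemma card_cliqueFinset_zero : #(G.cliqueFinset 0) = 1 := by
  simp [cliqueFinset, isNClique_zero, filter_eq']

lemma card_cliqueFinset_le_of_embedding [Fintype W] [DecidableEq W] {H : SimpleGraph W}
    [DecidableRel H.Adj] (f : H ↪g G) {A : Finset V} (hA : ∀ w, f w ∈ A) :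
    #(H.cliqueFinset r) ≤ #{t ∈ G.cliqueFinset r | t ⊆ A} := by
  refine card_le_card_of_injOn (·.map f.toEmbedding) (fun t ht ↦ ?_)
    (Finset.map_injective _).injOn
  rw [mem_coe, mem_cliqueFinset_iff] at ht
  refine mem_filter.2 ⟨mem_cliqueFinset_iff.2 (ht.map_embedding f), fun x hx ↦ ?_⟩
  obtain ⟨w, -, rfl⟩ := mem_map.1 hx
  exact hA w

lemma card_cliqueFinset_induce (A : Finset V) :
    #((G.induce A).cliqueFinset r) = #{t ∈ G.cliqueFinset r | t ⊆ A} := by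
  refine le_antisymm (card_cliqueFinset_le_of_embedding (Embedding.induce _) (by simp)) ?_
  refine card_le_card_of_injOn (·.subtype (· ∈ A)) (fun t ht ↦ ?_) (fun t ht t' ht' h ↦ ?_)
  · rw [mem_coe, mem_filter, mem_cliqueFinset_iff] at ht
    rw [mem_coe, mem_cliqueFinset_iff, isNClique_induce_iff]
    convert ht.1
    exact subtype_map_of_mem ht.2
  · rw [mem_coe, mem_filter] at ht ht'
    rw [← subtype_map_of_mem ht.2, ← subtype_map_of_mem ht'.2]
    exact congrArg _ h

lemma card_cliqueFinset_succ (v : V) :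
    #(G.cliqueFinset (r + 1)) = #{t ∈ G.cliqueFinset (r + 1) | t ⊆ {v}ᶜ} +
      #{t ∈ G.cliqueFinset r | t ⊆ G.neighborFinset v} := by
  rw [← card_filter_add_card_filter_not (p := (v ∈ ·)), add_comm]
  congr 1
  · simp only [subset_compl_singleton]
  refine card_nbij' (·.erase v) (insert v) (fun t ht ↦ ?_) (fun t ht ↦ ?_)
    (fun t ht ↦ insert_erase (mem_filter.1 ht).2) (fun t ht ↦ erase_insert fun hv ↦ ?_)
  · simp only [mem_coe, mem_filter, mem_cliqueFinset_iff] at ht ⊢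
    refine ⟨ht.1.erase_of_mem ht.2, fun x hx ↦ ?_⟩
    rw [mem_neighborFinset]
    exact ht.1.1 ht.2 (mem_of_mem_erase hx) (ne_of_mem_erase hx).symm
  · simp only [mem_coe, mem_filter, mem_cliqueFinset_iff] at ht ⊢
    exact ⟨ht.1.insert fun w hw ↦ (mem_neighborFinset ..).1 (ht.2 hw), mem_insert_self ..⟩
  · simp only [mem_coe, mem_filter] at ht
    exact G.notMem_neighborFinset_self v (ht.2 hv)

end CliqueCount

lemma CliqueFree.exists_mul_degree_le {V : Type*} [Fintype V] [Nonempty V] {G : SimpleGraph V}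
    [DecidableRel G.Adj] {j : ℕ} (hG : G.CliqueFree (j + 2)) :
    ∃ v, (j + 1) * G.degree v ≤ j * Fintype.card V := by
  obtain ⟨v, hv⟩ := G.exists_minimal_degree_vertex
  refine ⟨v, Nat.le_of_mul_le_mul_left ?_ (Fintype.card_pos (α := V))⟩
  have hedges : #G.edgeFinset ≤ #(turanGraph (Fintype.card V) (j + 1)).edgeFinset := by
    rw [card_edgeFinset_turanGraph]
    exact hG.card_edgeFinset_le
  have hturan := mul_card_edgeFinset_turanGraph_le (n := Fintype.card V) (r := j + 1)
  have hdeg : Fintype.card V * G.degree v ≤ 2 * #G.edgeFinset := by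
    rw [← sum_degrees_eq_twice_card_edges, ← hv, ← smul_eq_mul, ← card_univ]
    exact card_nsmul_le_sum _ _ _ fun w _ ↦ G.minDegree_le_degree w
  rw [add_tsub_cancel_right] at hturan
  calc Fintype.card V * ((j + 1) * G.degree v)
      = (j + 1) * (Fintype.card V * G.degree v) := by ring
    _ ≤ (j + 1) * (2 * #(turanGraph (Fintype.card V) (j + 1)).edgeFinset) :=
        Nat.mul_le_mul_left _ (by omega)
    _ ≤ Fintype.card V * (j * Fintype.card V) := by nlinarith

lemma CliqueFree.induce_neighborSet {V : Type*} {G : SimpleGraph V} {n : ℕ}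
    (hG : G.CliqueFree (n + 1)) (v : V) : (G.induce (G.neighborSet v)).CliqueFree n := by
  rw [cliqueFree_induce_iff, ← Set.univ_inter (G.neighborSet v)]
  exact (hG.cliqueFreeOn G).of_succ G (Set.mem_univ v)

lemma turanGraph_adj_succ {n k : ℕ} {a b : Fin n} :
    (turanGraph (n + 1) k).Adj a.succ b.succ ↔ (turanGraph n k).Adj a b := by
  simp only [turanGraph_adj, Fin.val_succ, ne_eq]
  exact not_congr ⟨Nat.ModEq.add_right_cancel' 1, Nat.ModEq.add_right 1⟩

def turanGraphSuccEmbedding (n k : ℕ) : turanGraph n k ↪g turanGraph (n + 1) k :=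
  ⟨Fin.succEmb n, turanGraph_adj_succ⟩

/- `y ↦ y + y / j + 1` enumerates the naturals not divisible by `j + 1`, taking residue `c`
modulo `j` to residue `c + 1` modulo `j + 1`. -/
lemma add_div_add_one_mod_succ {j : ℕ} (hj : 0 < j) (y : ℕ) :
    (y + y / j + 1) % (j + 1) = y % j + 1 := by
  have hy : y + y / j + 1 = y % j + 1 + (j + 1) * (y / j) := by
    have := Nat.mod_add_div y j
    linarith
  rw [hy, Nat.add_mul_mod_self_left, Nat.mod_eq_of_lt (by have := Nat.mod_lt y hj; omega)]

lemma add_div_add_one_strictMono (j : ℕ) : StrictMono fun y : ℕ ↦ y + y / j + 1 := by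
  intro a b hab
  have := Nat.div_le_div_right (c := j) hab.le
  dsimp only
  omega

lemma pos_of_succ_mul_le_mul {j d n : ℕ} (h : (j + 1) * d ≤ j * n) (hd : 0 < d) : 0 < j :=
  Nat.pos_of_ne_zero fun hj ↦ by subst hj; omega

lemma add_div_add_one_lt {j d n y : ℕ} (h : (j + 1) * d ≤ j * n) (hy : y < d) :
    y + y / j + 1 < n := by
  refine Nat.lt_of_mul_lt_mul_left (a := j) ?_
  have := Nat.mul_div_le y j
  nlinarith

def turanGraphNeighborEmbedding {j d n : ℕ} (h : (j + 1) * d ≤ j * n) :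
    turanGraph d j ↪g turanGraph n (j + 1) where
  toFun y := ⟨y + y / j + 1, add_div_add_one_lt h y.2⟩
  inj' _ _ hy := Fin.ext ((add_div_add_one_strictMono j).injective (congrArg Fin.val hy))
  map_rel_iff' {a b} := by
    have hj := pos_of_succ_mul_le_mul h a.pos
    change (a + a / j + 1 : ℕ) % (j + 1) ≠ (b + b / j + 1) % (j + 1) ↔ (a : ℕ) % j ≠ b % j
    rw [add_div_add_one_mod_succ hj, add_div_add_one_mod_succ hj]
    omega

lemma turanGraphNeighborEmbedding_mem_neighborFinset {j d n : ℕ}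
    (h : (j + 1) * d ≤ j * (n + 1)) (y : Fin d) :
    turanGraphNeighborEmbedding h y ∈ (turanGraph (n + 1) (j + 1)).neighborFinset 0 := by
  have hj := pos_of_succ_mul_le_mul h y.pos
  rw [mem_neighborFinset, turanGraph_adj]
  change 0 % (j + 1) ≠ (y + y / j + 1) % (j + 1)
  rw [add_div_add_one_mod_succ hj, Nat.zero_mod]
  omega

lemma card_cliqueFinset_turanGraph_add_le {j d n : ℕ} (h : (j + 1) * d ≤ j * (n + 1))
    (r : ℕ) :
    #((turanGraph n (j + 1)).cliqueFinset (r + 1)) + #((turanGraph d j).cliqueFinset r) ≤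
      #((turanGraph (n + 1) (j + 1)).cliqueFinset (r + 1)) := by
  rw [card_cliqueFinset_succ (0 : Fin (n + 1))]
  exact add_le_add
    (card_cliqueFinset_le_of_embedding (turanGraphSuccEmbedding n (j + 1))
      fun a ↦ mem_compl.2 (notMem_singleton.2 (Fin.succ_ne_zero a)))
    (card_cliqueFinset_le_of_embedding (turanGraphNeighborEmbedding h)
      (turanGraphNeighborEmbedding_mem_neighborFinset h))

theorem card_cliqueFinset_le_card_cliqueFinset_turanGraph {V : Type*} [Fintype V] [DecidableEq V]
    {G : SimpleGraph V} [DecidableRel G.Adj] {k : ℕ} (hG : G.CliqueFree (k + 1)) (r : ℕ) :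
    #(G.cliqueFinset r) ≤ #((turanGraph (Fintype.card V) k).cliqueFinset r) := by
  induction hn : Fintype.card V using Nat.strong_induction_on generalizing V k r with
  | _ n ih =>
  rcases r with _ | r
  · rw [card_cliqueFinset_zero, card_cliqueFinset_zero]
  rcases n with _ | n
  · have := card_cliqueFinset_le (G := G) (n := r + 1)
    rw [hn, Nat.choose_zero_succ] at this
    exact this.trans (Nat.zero_le _)
  rcases k with _ | j
  · have := Fintype.card_eq_zero_iff.2 (cliqueFree_one.1 hG)
    omega
  have : Nonempty V := Fintype.card_pos_iff.1 (by omega)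
  obtain ⟨v, hv⟩ := hG.exists_mul_degree_le
  rw [hn] at hv
  have hrest : (G.induce ↑({v}ᶜ : Finset V)).CliqueFree (j + 2) :=
    (cliqueFree_induce_iff ..).2 (hG.cliqueFreeOn G)
  have hnbhd : (G.induce ↑(G.neighborFinset v)).CliqueFree (j + 1) := by
    rw [coe_neighborFinset]
    exact hG.induce_neighborSet v
  calc #(G.cliqueFinset (r + 1))
      = #((G.induce ↑({v}ᶜ : Finset V)).cliqueFinset (r + 1)) +
          #((G.induce ↑(G.neighborFinset v)).cliqueFinset r) := by
        rw [card_cliqueFinset_succ v, card_cliqueFinset_induce, card_cliqueFinset_induce]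
    _ ≤ #((turanGraph n (j + 1)).cliqueFinset (r + 1)) +
          #((turanGraph (G.degree v) j).cliqueFinset r) := by
        refine add_le_add (ih n (by omega) hrest _ ?_) (ih _ ?_ hnbhd _ ?_)
        · simp only [coe_sort_coe, Fintype.card_coe, card_compl, card_singleton, hn,
            add_tsub_cancel_right]
        · exact hn ▸ G.degree_lt_card_verts v
        · simp only [coe_sort_coe, Fintype.card_coe, card_neighborFinset_eq_degree]
    _ ≤ #((turanGraph (n + 1) (j + 1)).cliqueFinset (r + 1)) :=
        card_cliqueFinset_turanGraph_add_le hv r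

lemma mem_copySet_completeGraph_iff {V : Type*} {G : SimpleGraph V} {r : ℕ} {C : G.Subgraph} :
    C ∈ (completeGraph (Fin r)).copySet G ↔
      ∃ s : Finset V, G.IsNClique r s ∧ (⊤ : G.Subgraph).induce ↑s = C := by
  constructor
  · rintro ⟨e⟩
    let f : completeGraph (Fin r) ↪g G :=
      ⟨⟨fun a ↦ e a, fun a b h ↦ e.injective (Subtype.ext h)⟩, fun {a b} ↦
        ⟨fun h hab ↦ G.ne_of_adj h (by rw [hab]),
          fun hab ↦ C.adj_sub (e.map_adj_iff.2 hab)⟩⟩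
    have hverts : (↑(univ.map f.toEmbedding) : Set V) = C.verts := by
      ext x
      simp only [coe_map, coe_univ, Set.image_univ, Set.mem_range]
      refine ⟨by rintro ⟨a, rfl⟩; exact (e a).2, fun hx ↦ ⟨e.symm ⟨x, hx⟩, ?_⟩⟩
      exact congrArg Subtype.val (e.apply_symm_apply _)
    refine ⟨_, IsNClique.map_embedding ⟨by simp, card_fin r⟩ f, Subgraph.ext hverts ?_⟩
    ext x y
    rw [Subgraph.induce_adj, hverts, Subgraph.top_adj]
    refine ⟨fun ⟨hx, hy, hxy⟩ ↦ ?_,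
      fun h ↦ ⟨C.edge_vert h, C.edge_vert h.symm, C.adj_sub h⟩⟩
    refine (e.symm.map_adj_iff (v := ⟨x, hx⟩) (w := ⟨y, hy⟩)).1 (e.symm.injective.ne ?_)
    exact fun h ↦ G.ne_of_adj hxy (congrArg Subtype.val h)
  · rintro ⟨s, hs, rfl⟩
    refine ⟨⟨(finCongr hs.2.symm).trans s.equivFin.symm, fun {a b} ↦ ?_⟩⟩
    simp only [Subgraph.coe_adj, Subgraph.induce_adj, Subgraph.top_adj, top_adj]
    exact ⟨fun h hab ↦ G.ne_of_adj h.2.2 (by rw [hab]),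
      fun hab ↦ ⟨coe_mem _, coe_mem _, hs.1 (coe_mem _) (coe_mem _)
        (Subtype.val_injective.ne ((Equiv.injective _).ne hab))⟩⟩

end SimpleGraph

theorem copyCount_completeGraph_eq_card_cliqueFinset {V : Type*} [Fintype V] [DecidableEq V]
    {G : SimpleGraph V} [DecidableRel G.Adj] {r : ℕ} :
    _root_.copyCount (completeGraph (Fin r)) G = #(G.cliqueFinset r) := by
  have : (completeGraph (Fin r)).copySet G =
      (fun s : Finset V ↦ (⊤ : G.Subgraph).induce ↑s) '' ↑(G.cliqueFinset r) := by
    ext C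
    simp [mem_copySet_completeGraph_iff]
  rw [_root_.copyCount, this, Set.ncard_image_of_injective _ fun s t h ↦ ?_, Set.ncard_coe_finset]
  exact coe_injective (congrArg SimpleGraph.Subgraph.verts h)

theorem fFree_completeGraph_iff {V : Type*} {G : SimpleGraph V} {n : ℕ} :
    FFree (completeGraph (Fin n)) G ↔ G.CliqueFree n := by
  simp [FFree, Set.eq_empty_iff_forall_notMem, mem_copySet_completeGraph_iff, CliqueFree]

theorem stmt0_general (n k r : ℕ) (h1 : 1 ≤ r) (hrk : r ≤ k) :
    exGen n (completeGraph (Fin r)) (completeGraph (Fin (k + 1)))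
      = _root_.copyCount (completeGraph (Fin r)) (turanGraph n k) := by
  refine IsGreatest.csSup_eq ⟨⟨turanGraph n k,
    fFree_completeGraph_iff.2 (turanGraph_cliqueFree (by omega)), rfl⟩, ?_⟩
  rintro _ ⟨G, hG, rfl⟩
  classical
  rw [copyCount_completeGraph_eq_card_cliqueFinset, copyCount_completeGraph_eq_card_cliqueFinset]
  have := card_cliqueFinset_le_card_cliqueFinset_turanGraph (fFree_completeGraph_iff.1 hG) r
  rwa [Fintype.card_fin] at this

theorem stmt0 (n k r : ℕ) (h1 : 1 ≤ r) (hrk : r ≤ k) (hkn : k ≤ n) :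
    exGen n (completeGraph (Fin r)) (completeGraph (Fin (k + 1)))
      = _root_.copyCount (completeGraph (Fin r)) (turanGraph n k) :=
  stmt0_general n k r h1 hrk
end

section
/- Among all complete k-partite graphs on n vertices, the Turán graph T(n,k) maximizes the number of copies of K_r for every r ≤ k. More precisely, if a complete k-partite graph T has two parts A, B with |A| ≤ |B| − 2, then moving one vertex from B to A does not decrease, and strictly increases when r ≥ 2 and k ≥ r, the number of copies of K_r. -/
open SimpleGraph Filter Asymptotics Finset

/-!
A clique of a complete multipartite graph takes at most one vertex from each part, so the number
of copies of `K_r` is the elementary symmetric polynomial `e_r` of the part sizes. Splitting off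
two parts, `e_r(x, y, z) = x y e_{r-2}(z) + (x + y) e_{r-1}(z) + e_r(z)`, so moving one vertex from
a part of size `y` to a part of size `x ≤ y - 2` changes `e_r` by `(y - x - 1) e_{r-2}(z) ≥ 0`,
which is positive when `2 ≤ r ≤ k` and all parts are nonempty. Each such move lowers the sum of
squares of the part sizes, so repeating it ends at part sizes differing by at most one; these are
determined up to order by their number and sum, hence are the part sizes of `T(n, k)`.
-/

namespace Multiset

variable {R : Type*} [CommSemiring R]

theorem esymm_cons_succ (a : R) (s : Multiset R) (m : ℕ) :
    (a ::ₘ s).esymm (m + 1) = a * s.esymm m + s.esymm (m + 1) := by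
  simp [esymm, powersetCard_cons, map_map, sum_map_mul_left, add_comm]

section Ordered

variable [PartialOrder R] [IsStrictOrderedRing R] {s : Multiset R}

theorem esymm_nonneg (hs : ∀ x ∈ s, 0 ≤ x) (m : ℕ) : 0 ≤ s.esymm m :=
  sum_nonneg fun _ hp => by
    obtain ⟨t, ht, rfl⟩ := mem_map.mp hp
    exact prod_nonneg fun x hx => hs x (mem_of_le (mem_powersetCard.mp ht).1 hx)

theorem esymm_pos (hs : ∀ x ∈ s, 0 < x) {m : ℕ} (hm : m ≤ card s) : 0 < s.esymm m := by
  induction s using Multiset.induction_on generalizing m with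
  | empty => simp_all [esymm]
  | cons a s ih =>
    have hs' : ∀ x ∈ s, 0 < x := fun x hx => hs x (mem_cons_of_mem hx)
    cases m with
    | zero => simp [esymm]
    | succ m =>
      rw [esymm_cons_succ]
      have ha := hs a (mem_cons_self a s)
      have hm' := ih hs' (m := m) (by simpa using hm)
      have hm'' := esymm_nonneg (fun x hx => (hs' x hx).le) (m + 1)
      positivity

end Ordered

theorem esymm_succ_cons_pred_cons_add_two {x y : ℕ} (h : x + 1 ≤ y) (s : Multiset ℕ)
    (m : ℕ) :
    ((x + 1) ::ₘ (y - 1) ::ₘ s).esymm (m + 2)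
      = (x ::ₘ y ::ₘ s).esymm (m + 2) + (y - x - 1) * s.esymm m := by
  obtain ⟨d, rfl⟩ := Nat.exists_eq_add_of_le h
  have hy : x + 1 + d - 1 = x + d := by omega
  have hd : x + 1 + d - x - 1 = d := by omega
  rw [hy, hd]
  simp only [esymm_cons_succ]
  ring

theorem esymm_cons_cons_le_esymm_succ_cons_pred_cons {x y : ℕ} (h : x + 1 ≤ y)
    (s : Multiset ℕ) (m : ℕ) :
    (x ::ₘ y ::ₘ s).esymm m ≤ ((x + 1) ::ₘ (y - 1) ::ₘ s).esymm m := by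
  match m with
  | 0 => simp [esymm]
  | 1 => simp [esymm, powersetCard_one]; omega
  | m + 2 => rw [esymm_succ_cons_pred_cons_add_two h]; exact Nat.le_add_right _ _

theorem esymm_cons_cons_lt_esymm_succ_cons_pred_cons {x y : ℕ} (h : x + 2 ≤ y)
    {s : Multiset ℕ} (hs : ∀ z ∈ s, 0 < z) {m : ℕ} (hm : 2 ≤ m) (hms : m ≤ card s + 2) :
    (x ::ₘ y ::ₘ s).esymm m < ((x + 1) ::ₘ (y - 1) ::ₘ s).esymm m := by
  obtain ⟨m, rfl⟩ := Nat.exists_eq_add_of_le' hm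
  rw [esymm_succ_cons_pred_cons_add_two (by omega)]
  exact Nat.lt_add_of_pos_right (Nat.mul_pos (by omega) (esymm_pos hs (by omega)))

def IsBalanced (s : Multiset ℕ) : Prop := ∀ x ∈ s, ∀ y ∈ s, x ≤ y + 1

theorem IsBalanced.exists_eq_replicate_add_replicate {s : Multiset ℕ} (hs : s.IsBalanced)
    (h0 : s ≠ 0) : ∃ q c d, 0 < d ∧ s = replicate c (q + 1) + replicate d q := by
  obtain ⟨q, hqs, hq⟩ := s.toFinset.exists_min_image id (toFinset_nonempty.mpr h0)
  rw [mem_toFinset] at hqs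
  simp only [mem_toFinset, id] at hq
  refine ⟨q, count (q + 1) s, card (s.filter (· ≠ q + 1)), ?_, ?_⟩
  · exact card_pos_iff_exists_mem.mpr ⟨q, mem_filter.mpr ⟨hqs, by omega⟩⟩
  · conv_lhs => rw [← filter_add_not (· = q + 1) s]
    rw [filter_eq']
    congr 1
    refine eq_replicate_card.mpr fun b hb => ?_
    obtain ⟨hbs, hbq⟩ := mem_filter.mp hb
    have := hq b hbs
    have := hs b hbs q hqs
    omega

theorem IsBalanced.eq_replicate_add_replicate {s : Multiset ℕ} (hs : s.IsBalanced) :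
    s = replicate (s.sum % card s) (s.sum / card s + 1)
      + replicate (card s - s.sum % card s) (s.sum / card s) := by
  rcases eq_or_ne s 0 with rfl | h0
  · simp
  obtain ⟨q, c, d, hd, rfl⟩ := hs.exists_eq_replicate_add_replicate h0
  have hsum : (replicate c (q + 1) + replicate d q).sum = (c + d) * q + c := by
    simp only [sum_add, sum_replicate, smul_eq_mul]; ring
  have hc : c < c + d := by omega
  simp only [card_add, card_replicate, hsum, Nat.mul_add_div (by omega : 0 < c + d),
    Nat.div_eq_of_lt hc, Nat.mul_add_mod, Nat.mod_eq_of_lt hc, add_zero, Nat.add_sub_cancel_left]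

theorem IsBalanced.eq_of_card_eq_of_sum_eq {s t : Multiset ℕ} (hs : s.IsBalanced)
    (ht : t.IsBalanced) (hcard : card s = card t) (hsum : s.sum = t.sum) : s = t := by
  rw [hs.eq_replicate_add_replicate, ht.eq_replicate_add_replicate, hcard, hsum]

theorem esymm_le_esymm_of_isBalanced {s t : Multiset ℕ} (ht : t.IsBalanced)
    (hcard : card s = card t) (hsum : s.sum = t.sum) (m : ℕ) : s.esymm m ≤ t.esymm m := by
  induction hN : (s.map (· ^ 2)).sum using Nat.strong_induction_on generalizing s with
  | _ N ih =>
  by_cases hs : s.IsBalanced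
  · rw [hs.eq_of_card_eq_of_sum_eq ht hcard hsum]
  simp only [IsBalanced, not_forall, not_le] at hs
  obtain ⟨y, hy, x, hx, hxy⟩ := hs
  have hdecomp : s = x ::ₘ y ::ₘ (s.erase x).erase y := by
    rw [cons_erase ((mem_erase_of_ne (by omega)).mpr hy), cons_erase hx]
  set u := (s.erase x).erase y
  rw [hdecomp] at hcard hsum hN ⊢
  refine (esymm_cons_cons_le_esymm_succ_cons_pred_cons (by omega) u m).trans
    (ih _ ?_ ?_ ?_ rfl)
  · obtain ⟨d, rfl⟩ := Nat.exists_eq_add_of_le hxy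
    simp only [map_cons, sum_cons] at hN ⊢
    have hpred : x + 1 + 1 + d - 1 = x + 1 + d := by omega
    rw [hpred, ← hN]
    nlinarith
  · simpa using hcard
  · simp only [sum_cons] at hsum ⊢
    omega

end Multiset

namespace Finset

variable {ι : Type*} [DecidableEq ι]

section Univ

variable {α : Type*} [Fintype ι]

theorem val_map_univ_eq_cons_cons (g : ι → α) {i j : ι} (hij : i ≠ j) :
    (univ : Finset ι).val.map g = g i ::ₘ g j ::ₘ ((univ.erase i).erase j).val.map g := by
  rw [← Multiset.map_cons, ← Multiset.map_cons, erase_val, erase_val,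
    Multiset.cons_erase (Multiset.mem_erase_of_ne hij.symm |>.mpr (mem_univ j)),
    Multiset.cons_erase (mem_univ i)]

theorem val_map_univ_update_update (g : ι → α) {i j : ι} (hij : i ≠ j) (x y : α) :
    (univ : Finset ι).val.map (Function.update (Function.update g i x) j y)
      = x ::ₘ y ::ₘ ((univ.erase i).erase j).val.map g := by
  rw [val_map_univ_eq_cons_cons _ hij]
  refine congrArg₂ _ (by simp [hij]) <|
    congrArg₂ _ (by simp) (Multiset.map_congr rfl fun l hl => ?_)
  rw [mem_val, mem_erase, mem_erase] at hl
  simp [hl.1, hl.2.1]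

end Univ

variable {V : Type*} [DecidableEq V]

theorem image_erase_of_injOn {f : V → ι} {S : Finset V} (hf : Set.InjOn f S) {v : V}
    (hv : v ∈ S) : (S.erase v).image f = (S.image f).erase (f v) := by
  ext b
  simp only [mem_image, mem_erase]
  constructor
  · rintro ⟨w, ⟨hwv, hw⟩, rfl⟩
    exact ⟨fun h => hwv (hf hw hv h), w, hw, rfl⟩
  · rintro ⟨hb, w, hw, rfl⟩
    exact ⟨w, ⟨fun h => hb (h ▸ rfl), hw⟩, rfl⟩

variable [Fintype V]

theorem filter_injOn_image_eq_insert (f : V → ι) {i : ι} {s : Finset ι} (hi : i ∉ s) :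
    ({S | Set.InjOn f S ∧ S.image f = insert i s} : Finset (Finset V))
      = (({v | f v = i} : Finset V) ×ˢ
          ({S | Set.InjOn f S ∧ S.image f = s} : Finset (Finset V))).image
            fun p => insert p.1 p.2 := by
  ext S
  simp only [mem_filter, mem_univ, true_and, mem_image, mem_product, Prod.exists]
  constructor
  · rintro ⟨hinj, himage⟩
    obtain ⟨v, hv, rfl⟩ := mem_image.mp (himage ▸ mem_insert_self i s)
    refine ⟨v, S.erase v, ⟨rfl, hinj.mono (by simp), ?_⟩, insert_erase hv⟩
    rw [image_erase_of_injOn hinj hv, himage, erase_insert hi]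
  · rintro ⟨v, T, ⟨rfl, hinj, rfl⟩, rfl⟩
    have hvT : v ∉ T := fun hv => hi (mem_image_of_mem f hv)
    refine ⟨?_, image_insert f v T⟩
    rw [coe_insert, Set.injOn_insert hvT]
    exact ⟨hinj, by simpa using hi⟩

theorem card_filter_injOn_image_eq (f : V → ι) (s : Finset ι) :
    #{S : Finset V | Set.InjOn f S ∧ S.image f = s} = ∏ i ∈ s, #{v | f v = i} := by
  induction s using Finset.induction_on with
  | empty =>
    rw [prod_empty, card_eq_one]
    exact ⟨∅, by ext S; simp +contextual [image_eq_empty]⟩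
  | insert i s hi ih =>
    rw [filter_injOn_image_eq_insert f hi, prod_insert hi, ← ih, ← card_product]
    refine card_image_of_injOn ?_
    rintro ⟨v, T⟩ hvT ⟨w, U⟩ hwU (h : insert v T = insert w U)
    simp only [coe_product, Set.mem_prod, coe_filter, mem_univ, true_and, Set.mem_ofPred_eq]
      at hvT hwU
    obtain ⟨hfv, -, hT⟩ := hvT
    obtain ⟨hfw, -, hU⟩ := hwU
    have hv : v ∉ T := fun hv => hi (hT ▸ hfv ▸ mem_image_of_mem f hv)
    have hw : w ∉ U := fun hw => hi (hU ▸ hfw ▸ mem_image_of_mem f hw)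
    have hvw : v = w := by
      rcases mem_insert.mp (h ▸ mem_insert_self v T) with hvw | hvU
      · exact hvw
      · exact absurd (hU ▸ hfv ▸ mem_image_of_mem f hvU) hi
    subst hvw
    rw [← erase_insert hv, h, erase_insert hw]

end Finset

namespace SimpleGraph

variable {V : Type*} {G : SimpleGraph V}

theorem Subgraph.coe_eq_top_of_iso_completeGraph {r : ℕ} {C : G.Subgraph}
    (e : completeGraph (Fin r) ≃g C.coe) : C.coe = ⊤ := by
  ext x y
  rw [← e.symm.map_adj_iff]
  simp [e.symm.injective.eq_iff]

theorem copySet_completeGraph [Fintype V] [DecidableEq V] [DecidableRel G.Adj] (r : ℕ) :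
    (completeGraph (Fin r)).copySet G
      = (fun s : Finset V => (⊤ : G.Subgraph).induce s) '' G.cliqueFinset r := by
  classical
  ext C
  constructor
  · rintro ⟨e⟩
    have htop := Subgraph.coe_eq_top_of_iso_completeGraph e
    have hadj : ∀ x ∈ C.verts, ∀ y ∈ C.verts, x ≠ y → C.Adj x y := fun x hx y hy hxy =>
      show C.coe.Adj ⟨x, hx⟩ ⟨y, hy⟩ by simpa [htop] using hxy
    refine ⟨C.verts.toFinset, ?_, ?_⟩
    · rw [Finset.mem_coe, mem_cliqueFinset_iff, isNClique_iff, Set.coe_toFinset]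
      refine ⟨fun x hx y hy hxy => (hadj x hx y hy hxy).adj_sub, ?_⟩
      rw [Set.toFinset_card, ← Fintype.card_congr e.toEquiv, Fintype.card_fin]
    · dsimp only
      rw [Set.coe_toFinset]
      exact Subgraph.IsInduced.induce_top_verts fun x hx y hy hxy => hadj x hx y hy hxy.ne
  · rintro ⟨s, hs, rfl⟩
    rw [Finset.mem_coe, mem_cliqueFinset_iff] at hs
    have htop : ((⊤ : G.Subgraph).induce s).coe = ⊤ := by
      rw [← induce_eq_coe_induce_top, induce_eq_top.mpr hs.isClique]
      rfl
    refine ⟨⟨(s.equivFinOfCardEq hs.card_eq).symm, fun {a b} => ?_⟩⟩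
    rw [htop]
    simp only [top_adj, ne_eq]
    exact not_congr (Equiv.injective _).eq_iff

variable {ι : Type*}

theorem isClique_comap_top_iff {f : V → ι} {s : Set V} :
    (SimpleGraph.comap f ⊤).IsClique s ↔ s.InjOn f := by
  rw [Set.injOn_iff_pairwise_ne]
  rfl

theorem card_cliqueFinset_comap_top [Fintype V] [DecidableEq V] [Fintype ι] [DecidableEq ι]
    (f : V → ι) (r : ℕ) :
    #((SimpleGraph.comap f ⊤).cliqueFinset r)
      = ((univ : Finset ι).val.map fun i => #{v | f v = i}).esymm r := by
  have hcard {S : Finset V} (hS : Set.InjOn f S) : #(S.image f) = #S := card_image_of_injOn hS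
  rw [Finset.esymm_map_val, card_eq_sum_card_fiberwise (f := fun S => S.image f)
    (t := powersetCard r univ)]
  · refine sum_congr rfl fun s hs => ?_
    rw [← card_filter_injOn_image_eq]
    congr 1
    ext S
    simp only [mem_filter, mem_cliqueFinset_iff, isNClique_iff, isClique_comap_top_iff, mem_univ,
      true_and]
    rw [mem_powersetCard_univ] at hs
    constructor
    · rintro ⟨⟨hinj, -⟩, rfl⟩
      exact ⟨hinj, rfl⟩
    · rintro ⟨hinj, rfl⟩
      exact ⟨⟨hinj, (hcard hinj).symm.trans hs⟩, rfl⟩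
  · intro S hS
    rw [mem_coe, mem_cliqueFinset_iff] at hS
    rw [mem_coe, mem_powersetCard_univ, hcard (isClique_comap_top_iff.mp hS.isClique), hS.card_eq]

end SimpleGraph

theorem copyCount_completeGraph {V : Type*} [Fintype V] [DecidableEq V] (G : SimpleGraph V)
    [DecidableRel G.Adj] (r : ℕ) :
    _root_.copyCount (completeGraph (Fin r)) G = #(G.cliqueFinset r) := by
  rw [_root_.copyCount, copySet_completeGraph, Set.ncard_image_of_injective,
    Set.ncard_coe_finset]
  intro s t h
  simpa using congrArg Subgraph.verts h

theorem copyCount_CMP (k : ℕ) (a : Fin k → ℕ) (r : ℕ) :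
    _root_.copyCount (completeGraph (Fin r)) (CMP k a)
      = ((univ : Finset (Fin k)).val.map a).esymm r := by
  rw [CMP, copyCount_completeGraph, card_cliqueFinset_comap_top]
  congr 2
  funext i
  rw [← Fintype.card_subtype, Fintype.card_congr (Equiv.sigmaSubtype i), Fintype.card_fin]

theorem card_filter_mod_eq {n k : ℕ} (hk : 0 < k) (i : Fin k) :
    #{v : Fin n | (v : ℕ) % k = i} = n / k + if (i : ℕ) < n % k then 1 else 0 := by
  have := Nat.count_modEq_card n hk i
  rw [Nat.mod_eq_of_lt i.isLt, Nat.count_eq_card_filter_range] at this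
  rw [← this, ← card_map Fin.valEmbedding, ← Nat.Iio_eq_range, ← Fin.map_valEmbedding_univ,
    filter_map]
  simp [Nat.ModEq, Nat.mod_eq_of_lt i.isLt]

theorem turanGraph_eq_comap {n k : ℕ} (hk : 0 < k) :
    turanGraph n k
      = SimpleGraph.comap (fun v : Fin n => (⟨v % k, Nat.mod_lt _ hk⟩ : Fin k)) ⊤ := by
  ext v w
  simp [turanGraph_adj, Fin.ext_iff]

def turanParts (n k : ℕ) : Multiset ℕ :=
  (univ : Finset (Fin k)).val.map fun i : Fin k => #{v : Fin n | (v : ℕ) % k = i}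

theorem copyCount_turanGraph {n k : ℕ} (hk : 0 < k) (r : ℕ) :
    _root_.copyCount (completeGraph (Fin r)) (turanGraph n k) = (turanParts n k).esymm r := by
  rw [turanGraph_eq_comap hk, copyCount_completeGraph, card_cliqueFinset_comap_top, turanParts]
  congr 2
  funext i
  congr 1
  ext v
  simp [Fin.ext_iff]

theorem card_turanParts (n k : ℕ) : Multiset.card (turanParts n k) = k := by
  simp [turanParts]

theorem sum_turanParts {n k : ℕ} (hk : 0 < k) : (turanParts n k).sum = n := by
  have := card_eq_sum_card_fiberwise (s := (univ : Finset (Fin n))) (t := univ)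
    (f := fun v : Fin n => (⟨v % k, Nat.mod_lt _ hk⟩ : Fin k))
    (fun _ _ => mem_coe.mpr (mem_univ _))
  rw [card_univ, Fintype.card_fin] at this
  simpa [turanParts, Fin.ext_iff, sum_eq_multiset_sum] using this.symm

theorem isBalanced_turanParts {n k : ℕ} (hk : 0 < k) : (turanParts n k).IsBalanced := by
  intro x hx y hy
  obtain ⟨i, -, rfl⟩ := Multiset.mem_map.mp hx
  obtain ⟨j, -, rfl⟩ := Multiset.mem_map.mp hy
  rw [card_filter_mod_eq hk, card_filter_mod_eq hk]
  split_ifs <;> omega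

theorem stmt3 (n k r : ℕ) (hk : 0 < k) (hr : r ≤ k) (a : Fin k → ℕ)
    (hpos : ∀ i, 1 ≤ a i) (hsum : ∑ i, a i = n) :
    _root_.copyCount (completeGraph (Fin r)) (CMP k a)
        ≤ _root_.copyCount (completeGraph (Fin r)) (turanGraph n k) ∧
      ∀ i j : Fin k, i ≠ j → a i + 2 ≤ a j →
        _root_.copyCount (completeGraph (Fin r)) (CMP k a)
            ≤ _root_.copyCount (completeGraph (Fin r))
                (CMP k (Function.update (Function.update a i (a i + 1)) j (a j - 1))) ∧
          (2 ≤ r →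
            _root_.copyCount (completeGraph (Fin r)) (CMP k a)
              < _root_.copyCount (completeGraph (Fin r))
                  (CMP k (Function.update (Function.update a i (a i + 1)) j (a j - 1)))) := by
  refine ⟨?_, fun i j hij hmove => ?_⟩
  · rw [copyCount_CMP, copyCount_turanGraph hk]
    refine Multiset.esymm_le_esymm_of_isBalanced (isBalanced_turanParts hk) ?_ ?_ r
    · simp [card_turanParts]
    · rw [sum_turanParts hk, ← hsum, sum_eq_multiset_sum]
  rw [copyCount_CMP, copyCount_CMP, val_map_univ_eq_cons_cons a hij,
    val_map_univ_update_update a hij]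
  refine ⟨Multiset.esymm_cons_cons_le_esymm_succ_cons_pred_cons (by omega) _ r,
    fun hr2 => Multiset.esymm_cons_cons_lt_esymm_succ_cons_pred_cons hmove ?_ hr2 ?_⟩
  · intro z hz
    obtain ⟨l, -, rfl⟩ := Multiset.mem_map.mp hz
    exact hpos l
  · rw [Multiset.card_map, card_val, card_erase_of_mem (mem_erase.mpr ⟨hij.symm, mem_univ j⟩),
      card_erase_of_mem (mem_univ i), card_univ, Fintype.card_fin]
    omega
end

section
/- Let a_1,…,a_k be nonnegative integers with a_1 ≤ a_2 − 2. Replacing (a_1, a_2) by (a_1+1, a_2−1) does not decrease the r-th elementary symmetric polynomial e_r(a_1,…,a_k) for any r. -/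
open SimpleGraph Filter Asymptotics Finset

/-- The `r`-th elementary symmetric polynomial of `a 0, …, a (k-1)`. -/
def esymm (k r : ℕ) (a : Fin k → ℕ) : ℕ :=
  ∑ S ∈ Finset.powersetCard r (Finset.univ : Finset (Fin k)), ∏ i ∈ S, a i

theorem stmt4 (k : ℕ) (a : Fin k → ℕ) (i j : Fin k) (hij : i ≠ j)
    (h : a i + 2 ≤ a j) (r : ℕ) :
    esymm k r a ≤ esymm k r (Function.update (Function.update a i (a i + 1)) j (a j - 1)) := by
  unfold esymm
  classical
  set b := Function.update (Function.update a i (a i + 1)) j (a j - 1) with hb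
  have hbi : b i = a i + 1 := by
    simp [hb, Function.update_of_ne hij]
  have hbj : b j = a j - 1 := by simp [hb]
  have hbx : ∀ x, x ≠ i → x ≠ j → b x = a x := by
    intro x hxi hxj
    simp [hb, Function.update_of_ne hxj, Function.update_of_ne hxi]
  set σ := Equiv.swap i j with hσ
  have hσi : σ i = j := Equiv.swap_apply_left i j
  have hσj : σ j = i := Equiv.swap_apply_right i j
  have hσx : ∀ x : Fin k, x ≠ i → x ≠ j → σ x = x := fun x hxi hxj =>
    Equiv.swap_apply_of_ne_of_ne hxi hxj
  have reindex : ∀ c : Fin k → ℕ,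
      ∑ S ∈ powersetCard r (univ : Finset (Fin k)), ∏ x ∈ S, c (σ x)
        = ∑ S ∈ powersetCard r (univ : Finset (Fin k)), ∏ x ∈ S, c x := by
    intro c
    refine Finset.sum_nbij' (fun S => S.map σ.toEmbedding) (fun S => S.map σ.toEmbedding)
      ?_ ?_ ?_ ?_ ?_
    · intro S hS
      simp only [mem_powersetCard_univ, Finset.card_map] at *
      exact hS
    · intro S hS
      simp only [mem_powersetCard_univ, Finset.card_map] at *
      exact hS
    · intro S hS
      ext x
      simp [hσ, Equiv.symm_swap, Equiv.swap_apply_self]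
    · intro S hS
      ext x
      simp [hσ, Equiv.symm_swap, Equiv.swap_apply_self]
    · intro S hS
      rw [Finset.prod_map]
      rfl
  have key : ∀ S ∈ powersetCard r (univ : Finset (Fin k)),
      (∏ x ∈ S, a x) + ∏ x ∈ S, a (σ x) ≤ (∏ x ∈ S, b x) + ∏ x ∈ S, b (σ x) := by
    intro S _
    by_cases hiS : i ∈ S <;> by_cases hjS : j ∈ S
    · -- both in S
      have hjS' : j ∈ S.erase i := Finset.mem_erase.2 ⟨hij.symm, hjS⟩
      have e1 : ∀ c : Fin k → ℕ,
          ∏ x ∈ S, c x = c i * (c j * ∏ x ∈ (S.erase i).erase j, c x) := by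
        intro c
        rw [← Finset.mul_prod_erase S c hiS, ← Finset.mul_prod_erase _ c hjS']
      have hrest : ∀ x ∈ (S.erase i).erase j, x ≠ i ∧ x ≠ j := by
        intro x hx
        simp only [Finset.mem_erase] at hx
        exact ⟨hx.2.1, hx.1⟩
      set P := ∏ x ∈ (S.erase i).erase j, a x with hP
      have eb : ∏ x ∈ (S.erase i).erase j, b x = P := by
        refine Finset.prod_congr rfl fun x hx => hbx x (hrest x hx).1 (hrest x hx).2
      have eaσ : ∏ x ∈ (S.erase i).erase j, a (σ x) = P := by
        refine Finset.prod_congr rfl fun x hx => by rw [hσx x (hrest x hx).1 (hrest x hx).2]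
      have ebσ : ∏ x ∈ (S.erase i).erase j, b (σ x) = P := by
        refine Finset.prod_congr rfl fun x hx => by
          rw [hσx x (hrest x hx).1 (hrest x hx).2]
          exact hbx x (hrest x hx).1 (hrest x hx).2
      rw [e1 a, e1 (fun x => a (σ x)), e1 b, e1 (fun x => b (σ x))]
      simp only [hσi, hσj, hbi, hbj, eb, eaσ, ebσ]
      rw [← hP]
      obtain ⟨m, hm⟩ : ∃ m, a j = m + 1 := ⟨a j - 1, by omega⟩
      have hm2 : a i + 1 ≤ m := by omega
      rw [hm]
      simp only [Nat.add_sub_cancel]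
      nlinarith [Nat.mul_le_mul_right P hm2]
    · -- i ∈ S, j ∉ S
      have e1 : ∀ c : Fin k → ℕ, ∏ x ∈ S, c x = c i * ∏ x ∈ S.erase i, c x :=
        fun c => (Finset.mul_prod_erase S c hiS).symm
      have hrest : ∀ x ∈ S.erase i, x ≠ i ∧ x ≠ j := by
        intro x hx
        simp only [Finset.mem_erase] at hx
        exact ⟨hx.1, fun hxj => hjS (hxj ▸ hx.2)⟩
      set P := ∏ x ∈ S.erase i, a x with hP
      have eb : ∏ x ∈ S.erase i, b x = P :=
        Finset.prod_congr rfl fun x hx => hbx x (hrest x hx).1 (hrest x hx).2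
      have eaσ : ∏ x ∈ S.erase i, a (σ x) = P :=
        Finset.prod_congr rfl fun x hx => by rw [hσx x (hrest x hx).1 (hrest x hx).2]
      have ebσ : ∏ x ∈ S.erase i, b (σ x) = P :=
        Finset.prod_congr rfl fun x hx => by
          rw [hσx x (hrest x hx).1 (hrest x hx).2]
          exact hbx x (hrest x hx).1 (hrest x hx).2
      rw [e1 a, e1 (fun x => a (σ x)), e1 b, e1 (fun x => b (σ x))]
      simp only [hσi, hbi, hbj, eb, eaσ, ebσ, ← hP]
      have : a i + 1 + (a j - 1) = a i + a j := by omega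
      rw [← add_mul, ← add_mul, this] -- LHS: a i * P + a j * P; goal forms?
    · -- j ∈ S, i ∉ S
      have e1 : ∀ c : Fin k → ℕ, ∏ x ∈ S, c x = c j * ∏ x ∈ S.erase j, c x :=
        fun c => (Finset.mul_prod_erase S c hjS).symm
      have hrest : ∀ x ∈ S.erase j, x ≠ i ∧ x ≠ j := by
        intro x hx
        simp only [Finset.mem_erase] at hx
        exact ⟨fun hxi => hiS (hxi ▸ hx.2), hx.1⟩
      set P := ∏ x ∈ S.erase j, a x with hP
      have eb : ∏ x ∈ S.erase j, b x = P :=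
        Finset.prod_congr rfl fun x hx => hbx x (hrest x hx).1 (hrest x hx).2
      have eaσ : ∏ x ∈ S.erase j, a (σ x) = P :=
        Finset.prod_congr rfl fun x hx => by rw [hσx x (hrest x hx).1 (hrest x hx).2]
      have ebσ : ∏ x ∈ S.erase j, b (σ x) = P :=
        Finset.prod_congr rfl fun x hx => by
          rw [hσx x (hrest x hx).1 (hrest x hx).2]
          exact hbx x (hrest x hx).1 (hrest x hx).2
      rw [e1 a, e1 (fun x => a (σ x)), e1 b, e1 (fun x => b (σ x))]
      simp only [hσj, hbi, hbj, eb, eaσ, ebσ, ← hP]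
      have : a j - 1 + (a i + 1) = a j + a i := by omega
      rw [← add_mul, ← add_mul, this]
    · -- neither
      have hrest : ∀ x ∈ S, x ≠ i ∧ x ≠ j := by
        intro x hx
        exact ⟨fun hxi => hiS (hxi ▸ hx), fun hxj => hjS (hxj ▸ hx)⟩
      have e1 : ∏ x ∈ S, b x = ∏ x ∈ S, a x :=
        Finset.prod_congr rfl fun x hx => hbx x (hrest x hx).1 (hrest x hx).2
      have e2 : ∏ x ∈ S, a (σ x) = ∏ x ∈ S, a x :=
        Finset.prod_congr rfl fun x hx => by rw [hσx x (hrest x hx).1 (hrest x hx).2]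
      have e3 : ∏ x ∈ S, b (σ x) = ∏ x ∈ S, a x :=
        Finset.prod_congr rfl fun x hx => by
          rw [hσx x (hrest x hx).1 (hrest x hx).2]
          exact hbx x (hrest x hx).1 (hrest x hx).2
      rw [e1, e2, e3]
  have main := Finset.sum_le_sum key
  rw [Finset.sum_add_distrib, Finset.sum_add_distrib, reindex a, reindex b] at main
  omega
end

section
/- Suppose χ(F) = k+1, H is weakly asymptotically F-Turán-good, and H is weakly K_{k+1}-Turán-stable. Then H is weakly F-Turán-stable: any n-vertex F-free graph G with N(H,G) ≥ ex(n,H,F) − o(n^{|V(H)|}) can be obtained from some complete k-partite graph by adding and removing o(n²) edges. (The proof may assume as hypotheses the graph removal lemma and the fact ex(n,K_{k+1},F) = o(n^{k+1}).) -/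
open SimpleGraph Filter Asymptotics Finset

/-- `T` is a complete `k`-partite graph. -/
def IsCompleteMultipartite (k : ℕ) {V : Type*} (T : SimpleGraph V) : Prop :=
  ∃ p : V → Fin k, ∀ u v, T.Adj u v ↔ p u ≠ p v

/-- The edit distance between two graphs on the same vertex set. -/
noncomputable def editDist {V : Type*} (G T : SimpleGraph V) : ℕ :=
  (symmDiff G.edgeSet T.edgeSet).ncard

/-!
Write `K = K_{k+1}` and `a = |V(H)|`. Applying `K`-stability to extremal `K`-free graphs yields
complete `k`-partite graphs, which are `F`-free as `χ(F) = k + 1` and contain all but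
`o(n^a)` of their copies of `H`; hence `ex(n, H, K) ≤ ex(n, H, F) + o(n^a)`.
An `F`-free `G` has at most `ex(n, K, F) = o(n^{k+1})` copies of `K`, so the removal lemma makes it
`K`-free by deleting `o(n²)` edges, which destroys only `o(n^a)` copies of `H`. The resulting `G'`
is near-extremal for `K`, hence `o(n²)`-close to a complete `k`-partite graph, and so is `G`.
-/

section Copies

variable {α V : Type*} {H : SimpleGraph α}

lemma SimpleGraph.copySet_eq_range_toSubgraph (G : SimpleGraph V) :
    H.copySet G = Set.range (Copy.toSubgraph (A := H) (B := G)) :=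
  Copy.range_toSubgraph.symm

lemma fFree_iff_free {G : SimpleGraph V} : FFree H G ↔ H.Free G := by
  simp [FFree, Free, isContained_iff_exists_iso_subgraph, Set.eq_empty_iff_forall_notMem,
    SimpleGraph.copySet]

lemma SimpleGraph.Copy.toSubgraph_verts_adj {G : SimpleGraph V} (f : Copy H G) :
    (f.toSubgraph.verts, f.toSubgraph.Adj) = (Set.range f, Relation.Map H.Adj f f) :=
  Prod.ext (by simp [Copy.toSubgraph, Set.image_univ]) rfl

lemma copyCount_le_card_pow [Fintype α] [Finite V] (G : SimpleGraph V) :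
    _root_.copyCount H G ≤ Nat.card V ^ Fintype.card α := by
  rw [_root_.copyCount, copySet_eq_range_toSubgraph, ← Set.image_univ,
    ← Nat.card_eq_fintype_card, ← Nat.card_fun]
  have : Finite (Copy H G) := Finite.of_injective _ DFunLike.coe_injective
  calc _ ≤ (Set.univ : Set (Copy H G)).ncard := Set.ncard_image_le
    _ ≤ Nat.card (α → V) := by
      rw [Set.ncard_univ]; exact Nat.card_le_card_of_injective _ DFunLike.coe_injective

end Copies

section Counting

variable {α V : Type*} (H : SimpleGraph α)

lemma copyCount_le_copyCount_add [Finite α] [Finite V] (A B : SimpleGraph V) :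
    _root_.copyCount H A ≤ _root_.copyCount H B +
      {f : α → V | ∃ x y, H.Adj x y ∧ (A \ B).Adj (f x) (f y)}.ncard := by
  -- subgraphs of `A` and of `B` are compared through their data `(verts, Adj)`
  have hΦ (G : SimpleGraph V) : Function.Injective fun C : G.Subgraph => (C.verts, C.Adj) :=
    fun C C' h => Subgraph.ext (congrArg Prod.fst h) (congrArg Prod.snd h)
  have hsub : (fun C : A.Subgraph => (C.verts, C.Adj)) '' H.copySet A ⊆
      (fun C : B.Subgraph => (C.verts, C.Adj)) '' H.copySet B ∪
      (fun f : α → V => (Set.range f, Relation.Map H.Adj f f)) ''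
        {f | ∃ x y, H.Adj x y ∧ (A \ B).Adj (f x) (f y)} := by
    rw [copySet_eq_range_toSubgraph, copySet_eq_range_toSubgraph]
    rintro _ ⟨_, ⟨f, rfl⟩, rfl⟩
    by_cases hf : ∀ x y, H.Adj x y → B.Adj (f x) (f y)
    · let g : Copy H B := ⟨⟨f, hf _ _⟩, f.injective⟩
      refine Or.inl ⟨g.toSubgraph, ⟨g, rfl⟩, ?_⟩
      simp only [Copy.toSubgraph_verts_adj]
      rfl
    · push Not at hf
      obtain ⟨x, y, hxy, hB⟩ := hf
      exact Or.inr ⟨f, ⟨x, y, hxy, (sdiff_adj _ _ _ _).mpr ⟨f.toHom.map_adj hxy, hB⟩⟩,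
        (Copy.toSubgraph_verts_adj f).symm⟩
  rw [_root_.copyCount, _root_.copyCount, ← Set.ncard_image_of_injective _ (hΦ A)]
  exact (Set.ncard_le_ncard hsub).trans <| (Set.ncard_union_le _ _).trans <|
    add_le_add (Set.ncard_image_of_injective _ (hΦ B)).le Set.ncard_image_le

instance SimpleGraph.Dart.finite [Finite V] (G : SimpleGraph V) : Finite G.Dart :=
  Finite.of_injective _ Dart.toProd_injective

lemma SimpleGraph.natCard_dart_eq_two_mul_ncard_edgeSet [Finite V] (G : SimpleGraph V) :
    Nat.card G.Dart = 2 * G.edgeSet.ncard := by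
  classical
  have := Fintype.ofFinite V
  rw [Nat.card_eq_fintype_card, dart_card_eq_twice_card_edges, ← coe_edgeFinset,
    Set.ncard_coe_finset]

lemma ncard_setOf_adj_apply_le [Finite α] [Finite V] (D : SimpleGraph V) {x y : α}
    (hxy : x ≠ y) :
    {f : α → V | D.Adj (f x) (f y)}.ncard ≤
      Nat.card D.Dart * Nat.card V ^ (Nat.card α - 2) := by
  have hrest : Nat.card (({x, y}ᶜ : Set α) → V) = Nat.card V ^ (Nat.card α - 2) := by
    rw [Nat.card_fun, Nat.card_coe_set_eq, Set.ncard_compl, Set.ncard_pair hxy]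
  rw [← hrest, ← Nat.card_prod, ← Nat.card_coe_set_eq]
  refine Nat.card_le_card_of_injective (fun f => (⟨(f.1 x, f.1 y), f.2⟩, fun z => f.1 z))
    fun f g hfg => Subtype.ext (funext fun z => ?_)
  simp only [Prod.mk.injEq, Dart.ext_iff] at hfg
  by_cases hz : z ∈ ({x, y} : Set α)
  · rcases hz with rfl | rfl
    exacts [hfg.1.1, hfg.1.2]
  · exact congrFun hfg.2 ⟨z, hz⟩

lemma ncard_setOf_exists_adj_apply_le [Finite α] [Finite V] (D : SimpleGraph V) :
    {f : α → V | ∃ x y, H.Adj x y ∧ D.Adj (f x) (f y)}.ncard ≤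
      Nat.card H.Dart * (Nat.card D.Dart * Nat.card V ^ (Nat.card α - 2)) := by
  have := Fintype.ofFinite H.Dart
  have hsub : {f : α → V | ∃ x y, H.Adj x y ∧ D.Adj (f x) (f y)} ⊆
      ⋃ d : H.Dart, {f | D.Adj (f d.fst) (f d.snd)} := by
    rintro f ⟨x, y, hxy, hf⟩
    exact Set.mem_iUnion.mpr ⟨⟨(x, y), hxy⟩, hf⟩
  calc _ ≤ _ := Set.ncard_le_ncard hsub
    _ ≤ ∑ d : H.Dart, {f : α → V | D.Adj (f d.fst) (f d.snd)}.ncard :=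
      Set.ncard_iUnion_le_of_fintype _
    _ ≤ _ := by
      rw [Nat.card_eq_fintype_card, ← smul_eq_mul, ← Finset.card_univ]
      exact Finset.sum_le_card_nsmul _ _ _ fun d _ => ncard_setOf_adj_apply_le D d.adj.ne

lemma copyCount_le_copyCount_add_mul [Finite α] [Finite V] (A B : SimpleGraph V) :
    _root_.copyCount H A ≤ _root_.copyCount H B +
      Nat.card H.Dart * (2 * (A.edgeSet \ B.edgeSet).ncard * Nat.card V ^ (Nat.card α - 2)) := by
  have h := ncard_setOf_exists_adj_apply_le H (A \ B) (α := α)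
  rw [natCard_dart_eq_two_mul_ncard_edgeSet (A \ B), edgeSet_sdiff] at h
  exact (copyCount_le_copyCount_add H A B).trans (Nat.add_le_add_left h _)

lemma exists_copyCount_le_add_isLittleO [Fintype α] (A B : (n : ℕ) → SimpleGraph (Fin n))
    (hAB : (fun n : ℕ => (((A n).edgeSet \ (B n).edgeSet).ncard : ℝ))
      =o[atTop] fun n : ℕ => (n : ℝ) ^ 2) :
    ∃ e : ℕ → ℝ, e =o[atTop] (fun n : ℕ => (n : ℝ) ^ Fintype.card α) ∧
      ∀ n, (_root_.copyCount H (A n) : ℝ) ≤ _root_.copyCount H (B n) + e n := by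
  set a := Fintype.card α
  refine ⟨fun n => (Nat.card H.Dart * 2 : ℝ) *
    ((((A n).edgeSet \ (B n).edgeSet).ncard : ℝ) * (n : ℝ) ^ (a - 2)), ?_, fun n => ?_⟩
  -- `a - 2` truncates, but `H` has an edge (so `2 ≤ a`) unless the error term vanishes
  · rcases (Nat.card H.Dart).eq_zero_or_pos with h0 | hpos
    · simp [h0]
    obtain ⟨d⟩ := Nat.card_pos_iff.mp hpos |>.1
    have ha : 2 ≤ a := by
      classical
      simpa [Finset.card_pair d.adj.ne] using Finset.card_le_univ {d.fst, d.snd}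
    have hpow :
        (fun n : ℕ => (n : ℝ) ^ 2 * (n : ℝ) ^ (a - 2)) = fun n : ℕ => (n : ℝ) ^ a :=
      funext fun n => by rw [← pow_add, Nat.add_sub_cancel' ha]
    exact (hpow ▸ hAB.mul_isBigO (isBigO_refl _ _)).const_mul_left _
  · have h := copyCount_le_copyCount_add_mul H (A n) (B n)
    rw [Nat.card_eq_fintype_card (α := α), Nat.card_eq_fintype_card (α := Fin n),
      Fintype.card_fin] at h
    have h' : (_root_.copyCount H (A n) : ℝ) ≤ _root_.copyCount H (B n) + Nat.card H.Dart *
        (2 * ((A n).edgeSet \ (B n).edgeSet).ncard * (n : ℝ) ^ (a - 2)) := by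
      exact_mod_cast h
    linarith

end Counting

section Extremal

variable {α β : Type*} [Fintype α] (H : SimpleGraph α) (F : SimpleGraph β) {n : ℕ}

lemma bddAbove_copyCount_fFree :
    BddAbove {m | ∃ G : SimpleGraph (Fin n), FFree F G ∧ _root_.copyCount H G = m} := by
  refine ⟨n ^ Fintype.card α, ?_⟩
  rintro _ ⟨G, -, rfl⟩
  simpa using copyCount_le_card_pow G

lemma copyCount_le_exGen {G : SimpleGraph (Fin n)} (hG : FFree F G) :
    _root_.copyCount H G ≤ exGen n H F :=
  le_csSup (bddAbove_copyCount_fFree H F) ⟨G, hG, rfl⟩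

lemma exists_copyCount_eq_exGen (hF : ∃ G : SimpleGraph (Fin n), FFree F G) :
    ∃ G : SimpleGraph (Fin n), FFree F G ∧ _root_.copyCount H G = exGen n H F := by
  obtain ⟨G, hG⟩ := hF
  have hne : {m | ∃ G : SimpleGraph (Fin n), FFree F G ∧ _root_.copyCount H G = m}.Nonempty :=
    ⟨_, G, hG, rfl⟩
  exact Nat.sSup_mem hne (bddAbove_copyCount_fFree H F)

end Extremal

lemma IsCompleteMultipartite.colorable {k : ℕ} {V : Type*} {T : SimpleGraph V}
    (hT : IsCompleteMultipartite k T) : T.Colorable k := by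
  obtain ⟨p, hp⟩ := hT
  exact ⟨Coloring.mk p fun h => (hp _ _).mp h⟩

lemma fFree_of_colorable {β V : Type*} {F : SimpleGraph β} {T : SimpleGraph V} {k : ℕ}
    (hF : ¬ F.Colorable k) (hT : T.Colorable k) : FFree F T :=
  fFree_iff_free.mpr fun ⟨f⟩ => hF (hT.of_hom f.toHom)

lemma fFree_completeGraph_bot {k : ℕ} (hk : 0 < k) (n : ℕ) :
    FFree (completeGraph (Fin (k + 1))) (⊥ : SimpleGraph (Fin n)) := by
  have : Nontrivial (Fin (k + 1)) := Fin.nontrivial_iff_two_le.mpr (by omega)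
  exact fFree_iff_free.mpr (free_bot top_ne_bot)

lemma editDist_le_ncard_sdiff_add {V : Type*} [Finite V] {G G' : SimpleGraph V} (h : G' ≤ G)
    (T : SimpleGraph V) : editDist G T ≤ (G.edgeSet \ G'.edgeSet).ncard + editDist G' T := by
  rw [← symmDiff_of_ge (edgeSet_mono h)]
  exact (Set.ncard_le_ncard (symmDiff_triangle _ _ _)).trans (Set.ncard_union_le _ _)

lemma ncard_sdiff_le_editDist {V : Type*} [Finite V] (G T : SimpleGraph V) :
    (G.edgeSet \ T.edgeSet).ncard ≤ editDist G T :=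
  Set.ncard_le_ncard (symmDiff_def G.edgeSet T.edgeSet ▸ le_sup_left)

lemma Asymptotics.IsLittleO.of_nonneg_of_le {ι : Type*} {l : Filter ι} {f u g : ι → ℝ}
    (hu : u =o[l] g) (hf : ∀ i, 0 ≤ f i) (hfu : ∀ i, f i ≤ u i) : f =o[l] g :=
  (isBigO_of_le l fun i => by
    rw [Real.norm_of_nonneg (hf i)]; exact (hfu i).trans (le_abs_self _)).trans_isLittleO hu

section Stability

variable {α β : Type*} [Fintype α] (H : SimpleGraph α) (F : SimpleGraph β)

def IsNearExtremal (G : (n : ℕ) → SimpleGraph (Fin n)) : Prop :=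
  (fun n : ℕ => (exGen n H F : ℝ) - (_root_.copyCount H (G n) : ℝ))
    =o[atTop] fun n : ℕ => (n : ℝ) ^ (Fintype.card α)

def IsNearCompleteMultipartite (k : ℕ) (G : (n : ℕ) → SimpleGraph (Fin n)) : Prop :=
  ∃ T : (n : ℕ) → SimpleGraph (Fin n), (∀ n, IsCompleteMultipartite k (T n)) ∧
    (fun n : ℕ => (editDist (G n) (T n) : ℝ)) =o[atTop] fun n : ℕ => (n : ℝ) ^ 2

def IsWeaklyTuranStable (k : ℕ) : Prop :=
  ∀ G : (n : ℕ) → SimpleGraph (Fin n),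
    (∀ n, FFree F (G n)) → IsNearExtremal H F G → IsNearCompleteMultipartite k G

theorem exists_exGen_completeGraph_le_exGen_add {k : ℕ} (hk : 0 < k) (hF : ¬ F.Colorable k)
    (hstable : IsWeaklyTuranStable H (completeGraph (Fin (k + 1))) k) :
    ∃ e : ℕ → ℝ, e =o[atTop] (fun n : ℕ => (n : ℝ) ^ Fintype.card α) ∧
      ∀ n, (exGen n H (completeGraph (Fin (k + 1))) : ℝ) ≤ exGen n H F + e n := by
  choose W hWfree hWcount using fun n =>
    exists_copyCount_eq_exGen H _ ⟨⊥, fFree_completeGraph_bot hk n⟩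
  obtain ⟨T, hT, hWT⟩ := hstable W hWfree <| by simp [IsNearExtremal, hWcount]
  obtain ⟨e, he, hWT_count⟩ := exists_copyCount_le_add_isLittleO H W T <|
    hWT.of_nonneg_of_le (fun n => by positivity)
      fun n => by exact_mod_cast ncard_sdiff_le_editDist (W n) (T n)
  refine ⟨e, he, fun n => ?_⟩
  have hTF : (_root_.copyCount H (T n) : ℝ) ≤ exGen n H F := by
    exact_mod_cast copyCount_le_exGen H F (fFree_of_colorable hF (hT n).colorable)
  rw [← hWcount n]
  linarith [hWT_count n]

end Stability

theorem stmt15_general {α β : Type*} [Fintype α] (k : ℕ)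
    (H : SimpleGraph α) (F : SimpleGraph β)
    (hχF : F.chromaticNumber = ((k : ℕ∞) + 1))
    -- `H` is weakly asymptotically `F`-Turán-good
    (T₀ : (n : ℕ) → SimpleGraph (Fin n))
    (hT₀ : ∀ n, IsCompleteMultipartite k (T₀ n))
    -- `H` is weakly `K_{k+1}`-Turán-stable
    (hstable : ∀ G : (n : ℕ) → SimpleGraph (Fin n),
        (∀ n, FFree (completeGraph (Fin (k + 1))) (G n)) →
        ((fun n : ℕ => (exGen n H (completeGraph (Fin (k + 1))) : ℝ) - (_root_.copyCount H (G n) : ℝ))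
            =o[atTop] fun n : ℕ => (n : ℝ) ^ (Fintype.card α)) →
        ∃ T : (n : ℕ) → SimpleGraph (Fin n), (∀ n, IsCompleteMultipartite k (T n)) ∧
          (fun n : ℕ => (editDist (G n) (T n) : ℝ)) =o[atTop] fun n : ℕ => (n : ℝ) ^ 2)
    -- the graph removal lemma for `K_{k+1}`
    (hremoval : ∀ G : (n : ℕ) → SimpleGraph (Fin n),
        ((fun n : ℕ => (_root_.copyCount (completeGraph (Fin (k + 1))) (G n) : ℝ))
            =o[atTop] fun n : ℕ => (n : ℝ) ^ (k + 1)) →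
        ∃ G' : (n : ℕ) → SimpleGraph (Fin n), (∀ n, G' n ≤ G n) ∧
          (∀ n, FFree (completeGraph (Fin (k + 1))) (G' n)) ∧
          (fun n : ℕ => (((G n).edgeSet \ (G' n).edgeSet).ncard : ℝ))
            =o[atTop] fun n : ℕ => (n : ℝ) ^ 2)
    -- `ex(n, K_{k+1}, F) = o(n^{k+1})`
    (hexK : (fun n : ℕ => (exGen n (completeGraph (Fin (k + 1))) F : ℝ))
        =o[atTop] fun n : ℕ => (n : ℝ) ^ (k + 1))
    -- a sequence of `F`-free graphs with almost extremally many copies of `H`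
    (G : (n : ℕ) → SimpleGraph (Fin n)) (hGfree : ∀ n, FFree F (G n))
    (hGmany : (fun n : ℕ => (exGen n H F : ℝ) - (_root_.copyCount H (G n) : ℝ))
        =o[atTop] fun n : ℕ => (n : ℝ) ^ (Fintype.card α)) :
    ∃ T : (n : ℕ) → SimpleGraph (Fin n), (∀ n, IsCompleteMultipartite k (T n)) ∧
      (fun n : ℕ => (editDist (G n) (T n) : ℝ)) =o[atTop] fun n : ℕ => (n : ℝ) ^ 2 := by
  have hk : 0 < k := by
    obtain ⟨p, -⟩ := hT₀ 1
    exact Fin.pos_iff_nonempty.mpr ⟨p 0⟩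
  have hF : ¬ F.Colorable k := fun hcol => by
    have h := hχF ▸ hcol.chromaticNumber_le
    norm_cast at h
    omega
  obtain ⟨e₁, he₁, hexGen⟩ := exists_exGen_completeGraph_le_exGen_add H F hk hF hstable
  obtain ⟨G', hG'G, hG'free, hdel⟩ := hremoval G <|
    hexK.of_nonneg_of_le (fun n => by positivity) fun n => by
      exact_mod_cast copyCount_le_exGen (completeGraph (Fin (k + 1))) F (hGfree n)
  obtain ⟨e₂, he₂, hGG'⟩ := exists_copyCount_le_add_isLittleO H G G' hdel
  have hG' : IsNearExtremal H (completeGraph (Fin (k + 1))) G' :=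
    ((he₁.add hGmany).add he₂).of_nonneg_of_le
      (fun n => sub_nonneg.mpr (by exact_mod_cast copyCount_le_exGen H _ (hG'free n)))
      fun n => by linarith [hexGen n, hGG' n]
  obtain ⟨T, hT, hG'T⟩ := hstable G' hG'free hG'
  exact ⟨T, hT, (hdel.add hG'T).of_nonneg_of_le (fun n => by positivity)
    fun n => by exact_mod_cast editDist_le_ncard_sdiff_add (hG'G n) (T n)⟩

theorem stmt15 {α β : Type*} [Fintype α] [Fintype β] (k : ℕ)
    (H : SimpleGraph α) (F : SimpleGraph β)
    (hχF : F.chromaticNumber = ((k : ℕ∞) + 1))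
    -- `H` is weakly asymptotically `F`-Turán-good
    (T₀ : (n : ℕ) → SimpleGraph (Fin n))
    (hT₀ : ∀ n, IsCompleteMultipartite k (T₀ n))
    (hgood : (fun n : ℕ => (exGen n H F : ℝ) - (_root_.copyCount H (T₀ n) : ℝ))
        =o[atTop] fun n : ℕ => (_root_.copyCount H (T₀ n) : ℝ))
    -- `H` is weakly `K_{k+1}`-Turán-stable
    (hstable : ∀ G : (n : ℕ) → SimpleGraph (Fin n),
        (∀ n, FFree (completeGraph (Fin (k + 1))) (G n)) →
        ((fun n : ℕ => (exGen n H (completeGraph (Fin (k + 1))) : ℝ) - (_root_.copyCount H (G n) : ℝ))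
            =o[atTop] fun n : ℕ => (n : ℝ) ^ (Fintype.card α)) →
        ∃ T : (n : ℕ) → SimpleGraph (Fin n), (∀ n, IsCompleteMultipartite k (T n)) ∧
          (fun n : ℕ => (editDist (G n) (T n) : ℝ)) =o[atTop] fun n : ℕ => (n : ℝ) ^ 2)
    -- the graph removal lemma for `K_{k+1}`
    (hremoval : ∀ G : (n : ℕ) → SimpleGraph (Fin n),
        ((fun n : ℕ => (_root_.copyCount (completeGraph (Fin (k + 1))) (G n) : ℝ))
            =o[atTop] fun n : ℕ => (n : ℝ) ^ (k + 1)) →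
        ∃ G' : (n : ℕ) → SimpleGraph (Fin n), (∀ n, G' n ≤ G n) ∧
          (∀ n, FFree (completeGraph (Fin (k + 1))) (G' n)) ∧
          (fun n : ℕ => (((G n).edgeSet \ (G' n).edgeSet).ncard : ℝ))
            =o[atTop] fun n : ℕ => (n : ℝ) ^ 2)
    -- `ex(n, K_{k+1}, F) = o(n^{k+1})`
    (hexK : (fun n : ℕ => (exGen n (completeGraph (Fin (k + 1))) F : ℝ))
        =o[atTop] fun n : ℕ => (n : ℝ) ^ (k + 1))
    -- a sequence of `F`-free graphs with almost extremally many copies of `H`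
    (G : (n : ℕ) → SimpleGraph (Fin n)) (hGfree : ∀ n, FFree F (G n))
    (hGmany : (fun n : ℕ => (exGen n H F : ℝ) - (_root_.copyCount H (G n) : ℝ))
        =o[atTop] fun n : ℕ => (n : ℝ) ^ (Fintype.card α)) :
    ∃ T : (n : ℕ) → SimpleGraph (Fin n), (∀ n, IsCompleteMultipartite k (T n)) ∧
      (fun n : ℕ => (editDist (G n) (T n) : ℝ)) =o[atTop] fun n : ℕ => (n : ℝ) ^ 2 :=
  stmt15_general k H F hχF T₀ hT₀ hstable hremoval hexK G hGfree hGmany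
end
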